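/- Let κ be an infinite cardinal, identified with the set of ordinals below κ, let K = {A ⊆ κ : |A| < κ}, and fix x < κ. Let K_{≥x} = {A ∈ K : A ≠ ∅ and min A = x}. Then there is a bijection from K onto K_{≥x} that is an asymorphism from the macrocube K(κ,K) onto the subballean of κ_K^♭ on K_{≥x}. -/

import Mathlib

open Set Cardinal

universe u v

variable {X : Type*} {Y : Type*} {P : Type*} {Q : Type*}

/-- The ball around a set: `B(A, r) = ⋃_{y ∈ A} B(y, r)`. -/
def ballSet (B : X → P → Set X) (A : Set X) (r : P) : Set X := ⋃ y ∈ A, B y r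

/-- `B : X → P → Set X` is the ball structure of a ballean with support `X` and radii `P`. -/
def IsBalleanBall (B : X → P → Set X) : Prop :=
  Nonempty P ∧ (∀ x r, x ∈ B x r) ∧ (∀ x y r, x ∈ B y r ↔ y ∈ B x r) ∧
    (∀ r s, ∃ t, ∀ x, ballSet B (B x r) s ⊆ B x t)

/-- A map between balleans is coarse. -/
def IsCoarse (BX : X → P → Set X) (BY : Y → Q → Set Y) (f : X → Y) : Prop :=
  ∀ r, ∃ s, ∀ x, f '' BX x r ⊆ BY (f x) s

/-- A map between balleans is effectively proper. -/
def IsEffectivelyProper (BX : X → P → Set X) (BY : Y → Q → Set Y) (f : X → Y) : Prop :=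
  ∀ s, ∃ r, ∀ x, f ⁻¹' BY (f x) s ⊆ BX x r

/-- A coarse embedding is a map that is both coarse and effectively proper. -/
def IsCoarseEmbedding (BX : X → P → Set X) (BY : Y → Q → Set Y) (f : X → Y) : Prop :=
  IsCoarse BX BY f ∧ IsEffectivelyProper BX BY f

/-- An asymorphism is a bijective map that is both coarse and effectively proper. -/
def IsAsymorphism (BX : X → P → Set X) (BY : Y → Q → Set Y) (f : X → Y) : Prop :=
  Function.Bijective f ∧ IsCoarse BX BY f ∧ IsEffectivelyProper BX BY f

/-- A subset of a ballean is bounded. -/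
def IsBoundedSet (B : X → P → Set X) (A : Set X) : Prop :=
  A = ∅ ∨ ∃ r, ∀ y ∈ A, A ⊆ B y r

/-- A subset of a ballean is large. -/
def IsLargeSet (B : X → P → Set X) (A : Set X) : Prop :=
  ∃ r, ballSet B A r = Set.univ

/-- A subset of a ballean is thick. -/
def IsThickSet (B : X → P → Set X) (A : Set X) : Prop :=
  ∀ r, ∃ x ∈ A, B x r ⊆ A

/-- A subset of a ballean is thin. -/
def IsThinSet (B : X → P → Set X) (A : Set X) : Prop :=
  ∀ r, ∃ V : Set X, IsBoundedSet B V ∧ ∀ x ∈ A \ V, B x r ∩ A = {x}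

/-- A `{0,1}`-valued function on a ballean is slowly oscillating. -/
def IsSlowlyOscillating (B : X → P → Set X) (f : X → Bool) : Prop :=
  ∀ r, ∃ V : Set X, IsBoundedSet B V ∧ ∀ x, x ∉ V → ∀ y ∈ B x r, ∀ z ∈ B x r, f y = f z

/-- A ballean is connected. -/
def IsConnectedBall (B : X → P → Set X) : Prop := ∀ x y, ∃ r, y ∈ B x r

/-- The connected component of a point of a ballean. -/
def balleanComponent (B : X → P → Set X) (x : X) : Set X := {y | ∃ r, y ∈ B x r}

/-- The ball structure of the hyperballean `exp B`. -/
def expBall (B : X → P → Set X) : Set X → P → Set (Set X) :=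
  fun A r => {C | A ⊆ ballSet B C r ∧ C ⊆ ballSet B A r}

/-- The ball structure of the subballean on a subset `S`. -/
def subBall (B : X → P → Set X) (S : Set X) : S → P → Set S :=
  fun y r => {z | (z : X) ∈ B (y : X) r}

/-- An ideal on a set `X`: a family of subsets closed under subsets and finite unions,
containing all finite sets, and not containing `X` itself. -/
def IsIdeal (I : Set (Set X)) : Prop :=
  (∀ A ∈ I, ∀ B ⊆ A, B ∈ I) ∧ (∀ A ∈ I, ∀ B ∈ I, A ∪ B ∈ I) ∧
    (∀ A : Set X, A.Finite → A ∈ I) ∧ Set.univ ∉ I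

/-- The ball structure of the point ideal ballean `X_I`:
`B_I(x,A) = {x}` if `x ∉ A` and `B_I(x,A) = {x} ∪ A` if `x ∈ A`. -/
def pointIdealBall (I : Set (Set X)) : X → I → Set X :=
  fun x A => insert x {y | y ∈ (A : Set X) ∧ x ∈ (A : Set X)}

/-- The ball structure of the `I`-ary ballean `X_{I-ary}`: `B(x,A) = {x} ∪ A`. -/
def aryBall (I : Set (Set X)) : X → I → Set X :=
  fun x A => insert x (A : Set X)

/-- The ball structure of the ballean `C(X,I)` on `𝒫(X)`: `B_C(Z,K) = {W | Z △ W ⊆ K}`. -/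
def cBall (I : Set (Set X)) : Set X → I → Set (Set X) :=
  fun Z K => {W | symmDiff Z W ⊆ (K : Set X)}

/-- The support of the flat hyperballean `X^♭`: all nonempty bounded subsets. -/
def flatSupport (B : X → P → Set X) : Set (Set X) := {A | A.Nonempty ∧ IsBoundedSet B A}


section Aux

variable {α : Type*}

lemma pib_ballSet_subset (I : Set (Set α)) (C : Set α) (S : I) :
    ballSet (pointIdealBall I) C S ⊆ C ∪ ↑S := by
  intro y hy
  simp only [ballSet, Set.mem_iUnion, pointIdealBall, Set.mem_insert_iff,
    Set.mem_setOf_eq] at hy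
  obtain ⟨z, hz, (rfl | ⟨h1, h2⟩)⟩ := hy
  · exact Or.inl hz
  · exact Or.inr h1

lemma pib_subset_ballSet {I : Set (Set α)} {C : Set α} {S : I} {x : α}
    (hC : x ∈ C) (hS : x ∈ (S : Set α)) : C ∪ ↑S ⊆ ballSet (pointIdealBall I) C S := by
  intro y hy
  simp only [ballSet, Set.mem_iUnion, pointIdealBall, Set.mem_insert_iff, Set.mem_setOf_eq]
  rcases hy with h | h
  · exact ⟨y, h, Or.inl rfl⟩
  · exact ⟨x, hC, Or.inr ⟨h, hS⟩⟩

lemma mem_expBall_pib {I : Set (Set α)} {A C : Set α} {S : I} {x : α}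
    (hA : x ∈ A) (hC : x ∈ C) (hS : x ∈ (S : Set α)) (h : symmDiff A C ⊆ (S : Set α)) :
    C ∈ expBall (pointIdealBall I) A S := by
  constructor
  · intro y hy
    apply pib_subset_ballSet hC hS
    by_cases hyc : y ∈ C
    · exact Or.inl hyc
    · exact Or.inr (h (Set.mem_symmDiff.mpr (Or.inl ⟨hy, hyc⟩)))
  · intro y hy
    apply pib_subset_ballSet hA hS
    by_cases hya : y ∈ A
    · exact Or.inl hya
    · exact Or.inr (h (Set.mem_symmDiff.mpr (Or.inr ⟨hy, hya⟩)))

lemma expBall_pib_symmDiff {I : Set (Set α)} {A C : Set α} {S : I}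
    (h : C ∈ expBall (pointIdealBall I) A S) : symmDiff A C ⊆ (S : Set α) := by
  intro y hy
  rcases Set.mem_symmDiff.mp hy with ⟨h1, h2⟩ | ⟨h1, h2⟩
  · rcases pib_ballSet_subset I C S (h.1 h1) with h' | h'
    · exact absurd h' h2
    · exact h'
  · rcases pib_ballSet_subset I A S (h.2 h1) with h' | h'
    · exact absurd h' h2
    · exact h'

lemma insert_symmDiff_insert' {x : α} {S T : Set α} (hS : x ∉ S) (hT : x ∉ T) :
    symmDiff (insert x S) (insert x T) = symmDiff S T := by
  ext y
  by_cases hy : y = x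
  · subst hy; simp [Set.mem_symmDiff, hS, hT]
  · simp [Set.mem_symmDiff, hy]

end Aux

/-- Let `κ` be an infinite cardinal (identified with the set `κ.ord.ToType` of ordinals
below `κ`), `K = {A ⊆ κ : |A| < κ}` and `x < κ`. Then there is a bijection from `K` onto
`K_{≥x} = {A ∈ K : A ≠ ∅, min A = x}` which is an asymorphism from the macrocube `K(κ,K)`
(the subballean of `C(κ,K)` on `K`) onto the subballean of `κ_K^♭` on `K_{≥x}`. -/
theorem stmt13 (κ : Cardinal.{u}) (hκ : Cardinal.aleph0 ≤ κ) (x : κ.ord.ToType) :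
    ∃ f : {A : Set κ.ord.ToType | #A < κ} → {A : Set κ.ord.ToType | #A < κ ∧ IsLeast A x},
      IsAsymorphism
        (subBall (cBall {A : Set κ.ord.ToType | #A < κ}) {A : Set κ.ord.ToType | #A < κ})
        (subBall (expBall (pointIdealBall {A : Set κ.ord.ToType | #A < κ}))
          {A : Set κ.ord.ToType | #A < κ ∧ IsLeast A x}) f := by

  classical
  set 𝒦 : Set (Set κ.ord.ToType) := {A : Set κ.ord.ToType | #A < κ} with h𝒦
  have h1 : (1 : Cardinal) < κ := lt_of_lt_of_le Cardinal.one_lt_aleph0 hκ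
  have hX : #(κ.ord.ToType) = κ := Cardinal.mk_ord_toType κ
  have hIic : #(Set.Iic x) < κ := by
    have hIic_eq : Set.Iic x = insert x (Set.Iio x) := by
      ext y
      simp [le_iff_lt_or_eq, or_comm]
    rw [hIic_eq]
    exact lt_of_le_of_lt Cardinal.mk_insert_le
      (Cardinal.add_lt_of_lt hκ (Cardinal.mk_Iio_ord_toType x) h1)
  have hIoi : #(Set.Ioi x) = κ := by
    have hle : κ ≤ #(Set.Iic x) + #(Set.Ioi x) := by
      have huniv : Set.Iic x ∪ Set.Ioi x = Set.univ := by
        ext y; simp [le_or_gt]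
      calc κ = #(Set.univ : Set κ.ord.ToType) := by rw [Cardinal.mk_univ, hX]
        _ = #(Set.Iic x ∪ Set.Ioi x : Set κ.ord.ToType) := by rw [huniv]
        _ ≤ _ := Cardinal.mk_union_le _ _
    rcases lt_or_ge #(Set.Ioi x) κ with h | h
    · exact absurd (lt_of_le_of_lt hle (Cardinal.add_lt_of_lt hκ hIic h)) (lt_irrefl κ)
    · exact le_antisymm (le_trans (Cardinal.mk_set_le _) hX.le) h
  obtain ⟨g⟩ : Nonempty (κ.ord.ToType ≃ (Set.Ioi x : Set κ.ord.ToType)) := by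
    rw [← Cardinal.eq, hX, hIoi]
  set e : κ.ord.ToType → κ.ord.ToType := fun a => ((g a : Set.Ioi x) : κ.ord.ToType) with he_def
  have he : Function.Injective e := fun a b h => g.injective (Subtype.ext h)
  have hxe : ∀ a, x < e a := fun a => (g a).2
  have hxnot : ∀ A : Set κ.ord.ToType, x ∉ e '' A := by
    rintro A ⟨a, _, ha⟩
    exact absurd ha (hxe a).ne'
  have hsm : ∀ {A : Set κ.ord.ToType}, #A < κ → #(insert x (e '' A) : Set κ.ord.ToType) < κ := by
    intro A hA
    calc #(insert x (e '' A) : Set κ.ord.ToType) ≤ #(e '' A) + 1 := Cardinal.mk_insert_le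
      _ < κ := Cardinal.add_lt_of_lt hκ (lt_of_le_of_lt (Cardinal.mk_image_le) hA) h1
  have hleast : ∀ A : Set κ.ord.ToType, IsLeast (insert x (e '' A)) x := by
    intro A
    refine ⟨Set.mem_insert _ _, ?_⟩
    intro y hy
    rcases Set.mem_insert_iff.mp hy with h | ⟨a, _, rfl⟩
    · exact le_of_eq h.symm
    · exact le_of_lt (hxe a)
  refine ⟨fun A => ⟨insert x (e '' (A : Set κ.ord.ToType)), hsm A.2, hleast _⟩, ?_, ?_, ?_⟩
  · constructor
    · intro A B h
      have h' : insert x (e '' (A : Set κ.ord.ToType)) = insert x (e '' (B : Set κ.ord.ToType)) :=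
        congrArg Subtype.val h
      have hsd : e '' symmDiff (A : Set κ.ord.ToType) (B : Set κ.ord.ToType) = ∅ := by
        rw [Set.image_symmDiff he,
          ← insert_symmDiff_insert' (hxnot (A : Set κ.ord.ToType)) (hxnot (B : Set κ.ord.ToType)),
          h', symmDiff_self]
        rfl
      have : symmDiff (A : Set κ.ord.ToType) (B : Set κ.ord.ToType) = ∅ :=
        Set.image_eq_empty.mp hsd
      exact Subtype.ext (symmDiff_eq_bot.mp this)
    · rintro ⟨C, hCκ, hCl⟩
      refine ⟨⟨e ⁻¹' C, lt_of_le_of_lt (Cardinal.mk_preimage_of_injective e C he) hCκ⟩, ?_⟩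
      apply Subtype.ext
      show insert x (e '' (e ⁻¹' C)) = C
      apply Set.Subset.antisymm
      · intro y hy
        rcases Set.mem_insert_iff.mp hy with h | hy'
        · exact h ▸ hCl.1
        · exact Set.image_preimage_subset e C hy'
      · intro y hy
        rcases eq_or_lt_of_le (hCl.2 hy) with h | h
        · exact h ▸ Set.mem_insert _ _
        · refine Set.mem_insert_of_mem _ ⟨g.symm ⟨y, h⟩, ?_, ?_⟩
          · show e (g.symm ⟨y, h⟩) ∈ C
            simpa [he_def] using hy
          · simp [he_def]
  · intro r
    refine ⟨⟨insert x (e '' (r : Set κ.ord.ToType)), hsm r.2⟩, ?_⟩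
    intro Z
    rintro _ ⟨W, hW, rfl⟩
    have hZW : symmDiff (Z : Set κ.ord.ToType) (W : Set κ.ord.ToType) ⊆ (r : Set κ.ord.ToType) := hW
    show insert x (e '' (W : Set κ.ord.ToType)) ∈
      expBall (pointIdealBall 𝒦) (insert x (e '' (Z : Set κ.ord.ToType))) _
    apply mem_expBall_pib (Set.mem_insert _ _) (Set.mem_insert _ _) (Set.mem_insert _ _)
    rw [insert_symmDiff_insert' (hxnot _) (hxnot _), ← Set.image_symmDiff he]
    exact Set.Subset.trans (Set.image_mono hZW) (Set.subset_insert _ _)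
  · intro s
    refine ⟨⟨e ⁻¹' (s : Set κ.ord.ToType),
      lt_of_le_of_lt (Cardinal.mk_preimage_of_injective e _ he) s.2⟩, ?_⟩
    intro Z W hW
    have h' : insert x (e '' (W : Set κ.ord.ToType)) ∈
        expBall (pointIdealBall 𝒦) (insert x (e '' (Z : Set κ.ord.ToType))) s := hW
    have h2 := expBall_pib_symmDiff h'
    rw [insert_symmDiff_insert' (hxnot _) (hxnot _), ← Set.image_symmDiff he] at h2
    show symmDiff (Z : Set κ.ord.ToType) (W : Set κ.ord.ToType) ⊆ _
    exact Set.image_subset_iff.mp h2
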